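/- arXiv:0708.2659 — 3 statements merged into one kernel-verified Lean document; each statement's English description precedes it below -/
import Mathlib

section
/- Let f : S → T be a monotone morphism of ordered face structures and a a face of T. If f^{−1}(a) is nonempty, then all faces in f^{−1}(a) are pairwise parallel and f^{−1}(a) is linearly ordered by <^+; moreover there exist b, c ∈ f^{−1}(a) and a flat upper path b, α_1, …, α_r, c through unary faces not in γ(S^{−λ}) such that f^{−1}(a) = {b} ∪ {γ(α_i) : 1 ≤ i ≤ r}. -/
/-!  Ordered face structures, following M. Zawadowski,
"On ordered face structures and many-to-one computads".

We encode the graded set of faces as `F : ℕ → Type`, where `F (k+1)` is the set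
of faces of dimension `k`, and `F 0` is an empty type playing the role of
`S₋₁`.  The codomain of a face of dimension `k+1` is a face of dimension `k`,
and its domain `δ` is a set of elements of `F (k+1) ⊕ F k`, where `Sum.inl x`
is a genuine face `x` and `Sum.inr u` stands for the empty face `1ᵤ` on `u`.
-/

structure PreOFS where
  F : ℕ → Type
  γ : ∀ {k : ℕ}, F (k + 2) → F (k + 1)
  δ : ∀ {k : ℕ}, F (k + 2) → Set (F (k + 1) ⊕ F k)
  sim : ∀ {k : ℕ}, F (k + 1) → F (k + 1) → Prop

namespace PreOFS

variable (S : PreOFS)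

/-- The genuine (non-empty) faces in the domain of `a`. -/
def realDom {k : ℕ} (a : S.F (k + 2)) : Set (S.F (k + 1)) :=
  {x | Sum.inl x ∈ S.δ a}

/-- `a` has empty domain (`δ(a) = 1ᵤ`). -/
def isEps {k : ℕ} (a : S.F (k + 2)) : Prop :=
  ∃ u, Sum.inr u ∈ S.δ a

/-- `a` is a loop (`δ(a) = γ(a)` as sets). -/
def isLoop {k : ℕ} (a : S.F (k + 2)) : Prop :=
  S.δ a = {Sum.inl (S.γ a)}

/-- Codomain of a generalized face (`γ(1ᵤ) = u`). -/
def cod {k : ℕ} : S.F (k + 2) ⊕ S.F (k + 1) → S.F (k + 1)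
  | Sum.inl x => S.γ x
  | Sum.inr u => u

/-- Domain of a generalized face (`δ(1ᵤ) = u`). -/
def domM {k : ℕ} : S.F (k + 2) ⊕ S.F (k + 1) → Set (S.F (k + 1) ⊕ S.F k)
  | Sum.inl x => S.δ x
  | Sum.inr u => {Sum.inl u}

/-- `δ̇⁻ᵞ(a)`: the non-loop genuine faces in the domain of `a`. -/
def nlDom {k : ℕ} (a : S.F (k + 3)) : Set (S.F (k + 2)) :=
  {x | Sum.inl x ∈ S.δ a ∧ ¬ S.isLoop x}

/-- The strict upper order `<⁺`. -/
def ltP {k : ℕ} : S.F (k + 1) → S.F (k + 1) → Prop :=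
  Relation.TransGen
    (fun a b => ∃ α : S.F (k + 2), ¬ S.isLoop α ∧ Sum.inl a ∈ S.δ α ∧ S.γ α = b)

def leP {k : ℕ} (a b : S.F (k + 1)) : Prop := a = b ∨ S.ltP a b

/-- Comparability under `<⁺`. -/
def perpP {k : ℕ} (a b : S.F (k + 1)) : Prop := S.ltP a b ∨ S.ltP b a

/-- Comparability under `<∼`. -/
def perpS {k : ℕ} (a b : S.F (k + 1)) : Prop := S.sim a b ∨ S.sim b a

/-- The lower relation `<⁻`. -/
def ltM {k : ℕ} : S.F (k + 2) → S.F (k + 2) → Prop :=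
  Relation.TransGen (fun a b => Sum.inl (S.γ a) ∈ S.δ b)

/-- `θ(a) = δ(a) ∪ γ(a)` (with empty faces). -/
def thetaFull {k : ℕ} (a : S.F (k + 2)) : Set (S.F (k + 1) ⊕ S.F k) :=
  insert (Sum.inl (S.γ a)) (S.δ a)

/-- `θ̇(a)`: the genuine faces in `δ(a) ∪ γ(a)`. -/
def thetaDot {k : ℕ} (a : S.F (k + 2)) : Set (S.F (k + 1)) :=
  insert (S.γ a) (S.realDom a)

/-- `ι(b)`: the internal faces of `b`. -/
def iota {k : ℕ} (b : S.F (k + 3)) : Set (S.F (k + 1)) :=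
  {u | ∃ x ∈ S.nlDom b, ∃ y ∈ S.nlDom b, S.γ x = u ∧ u ∈ S.realDom y}

/-- `A ≡₁ B` : equality of sets of generalized faces modulo empty faces. -/
def eq1 {k : ℕ} (A B : Set (S.F (k + 2) ⊕ S.F (k + 1))) : Prop :=
  {x : S.F (k + 2) | Sum.inl x ∈ A} = {x : S.F (k + 2) | Sum.inl x ∈ B} ∧
    ({u : S.F (k + 1) | Sum.inr u ∈ A} ∪
        ⋃ x ∈ {x : S.F (k + 2) | Sum.inl x ∈ A}, S.thetaDot x) =
      ({u : S.F (k + 1) | Sum.inr u ∈ B} ∪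
        ⋃ x ∈ {x : S.F (k + 2) | Sum.inl x ∈ B}, S.thetaDot x)

end PreOFS

namespace PreOFS

/-- Iterated codomain, going down `j` dimensions. -/
def down (S : PreOFS) : ∀ (k j : ℕ), S.F (k + j + 1) → S.F (k + 1)
  | _, 0, a => a
  | k, j + 1, a => down S k j (S.γ a)

/-- `γ⁽ˡ⁾` : iterated codomain down to dimension `l`. -/
def gIter (S : PreOFS) {k : ℕ} (l : ℕ) (h : l ≤ k) (a : S.F (k + 1)) : S.F (l + 1) :=
  down S l (k - l) (_root_.cast (congrArg S.F (by omega : k + 1 = l + (k - l) + 1)) a)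

/-- The combined order `<^S`. -/
def ltS (S : PreOFS) {k : ℕ} (a b : S.F (k + 1)) : Prop :=
  S.ltP a b ∨ ∃ l : ℕ, ∃ h : l ≤ k, S.sim (S.gIter l h a) (S.gIter l h b)

end PreOFS

/-- The axioms of an ordered face structure. -/
structure IsOFS (S : PreOFS) : Prop where
  empty_bot : IsEmpty (S.F 0)
  fin : ∀ k, Finite (S.F k)
  bdd : ∃ n, ∀ k, n < k → IsEmpty (S.F k)
  nonempty₀ : Nonempty (S.F 1)
  dom_nonempty : ∀ {k : ℕ} (a : S.F (k + 2)), (S.δ a).Nonempty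
  dom_eps : ∀ {k : ℕ} (a : S.F (k + 2)) (u : S.F k),
    Sum.inr u ∈ S.δ a → S.δ a = {Sum.inr u}
  dom_dim1 : ∀ a : S.F 2, ∃ x, S.δ a = {Sum.inl x}
  glob_γ : ∀ {k : ℕ} (a : S.F (k + 3)),
    ({S.γ (S.γ a)} : Set (S.F (k + 1))) =
      {y | ∃ e ∈ S.δ a, S.cod e = y} \ (⋃ x ∈ S.nlDom a, S.realDom x)
  glob_δ_low : ∀ a : S.F 3,
    S.realDom (S.γ a) =
      (⋃ e ∈ S.δ a, {x : S.F 1 | Sum.inl x ∈ S.domM e}) \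
        {y : S.F 1 | ∃ x ∈ S.nlDom a, S.γ x = y}
  glob_δ : ∀ {k : ℕ} (a : S.F (k + 4)),
    S.eq1 (S.δ (S.γ a))
      ((⋃ e ∈ S.δ a, S.domM e) \
        {e : S.F (k + 2) ⊕ S.F (k + 1) | ∃ x ∈ S.nlDom a, Sum.inl (S.γ x) = e})
  local_disc : ∀ {k : ℕ} (a : S.F (k + 2)) (x y : S.F (k + 1)),
    Sum.inl x ∈ S.δ a → Sum.inl y ∈ S.δ a → ¬ S.ltP x y
  strictP : ∀ {k : ℕ} (x : S.F (k + 1)), ¬ S.ltP x x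
  linearP₀ : ∀ x y : S.F 1, x = y ∨ S.ltP x y ∨ S.ltP y x
  sim_irrefl : ∀ {k : ℕ} (x : S.F (k + 1)), ¬ S.sim x x
  sim_trans : ∀ {k : ℕ} (x y z : S.F (k + 1)), S.sim x y → S.sim y z → S.sim x z
  disj : ∀ {k : ℕ} (x y : S.F (k + 1)), S.perpS x y → ¬ S.perpP x y
  sim_lt_minus : ∀ {k : ℕ} (a b : S.F (k + 2)), S.sim a b → S.ltM a b
  sim_dim0 : ∀ x y : S.F 1, ¬ S.sim x y
  disj_theta : ∀ {k : ℕ} (a b : S.F (k + 2)),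
    S.thetaFull a ∩ S.thetaFull b = ∅ → (S.sim a b ↔ S.ltM a b)
  pencil₁ : ∀ {k : ℕ} (a b : S.F (k + 2)), a ≠ b →
    (S.thetaDot a ∩ S.thetaDot b).Nonempty → S.perpS a b ∨ S.perpP a b
  pencil₂ : ∀ {k : ℕ} (a b : S.F (k + 3)), S.isEps a →
    S.γ (S.γ a) ∈ S.iota b → S.sim a b ∨ S.ltP a b
  loop_fill : ∀ {k : ℕ} (x : S.F (k + 2)), S.isLoop x →
    ∃ α : S.F (k + 3), ¬ S.isLoop α ∧ S.γ α = x

/-- A monotone morphism of ordered face structures: it commutes with `γ`,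
restricts to a bijection between the (genuine) domains, preserves empty
domains, and preserves the order `<∼`. -/
structure IsOFSHom (S T : PreOFS) (f : ∀ k, S.F k → T.F k) : Prop where
  map_γ : ∀ {k : ℕ} (a : S.F (k + 2)), f (k + 1) (S.γ a) = T.γ (f (k + 2) a)
  map_eps : ∀ {k : ℕ} (a : S.F (k + 2)) (u : S.F k),
    Sum.inr u ∈ S.δ a → T.δ (f (k + 2) a) = {Sum.inr (f k u)}
  map_dom : ∀ {k : ℕ} (a : S.F (k + 2)),
    Set.BijOn (f (k + 1)) (S.realDom a) (T.realDom (f (k + 2) a))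
  map_sim : ∀ {k : ℕ} (x y : S.F (k + 1)), S.sim x y → T.sim (f (k + 1) x) (f (k + 1) y)

namespace PreOFS

open Relation Set

variable {S T : PreOFS}

/-- The one-step relation generating `<⁺`. -/
def stepRel (S : PreOFS) {k : ℕ} (a b : S.F (k + 1)) : Prop :=
  ∃ α : S.F (k + 2), ¬ S.isLoop α ∧ Sum.inl a ∈ S.δ α ∧ S.γ α = b

lemma ltP_eq_transGen {k : ℕ} :
    S.ltP (k := k) = Relation.TransGen (S.stepRel (k := k)) := rfl

lemma ltP_single {k : ℕ} {a b : S.F (k + 1)} (h : S.stepRel a b) : S.ltP a b :=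
  Relation.TransGen.single h

lemma ltP_trans {k : ℕ} {a b c : S.F (k + 1)} (h1 : S.ltP a b) (h2 : S.ltP b c) :
    S.ltP a c := Relation.TransGen.trans h1 h2

lemma ltP_irrefl (hS : IsOFS S) {k : ℕ} (a : S.F (k + 1)) : ¬ S.ltP a a :=
  hS.strictP a

lemma leP_refl {k : ℕ} (a : S.F (k + 1)) : S.leP a a := Or.inl rfl

lemma ltP_leP {k : ℕ} {a b : S.F (k + 1)} (h : S.ltP a b) : S.leP a b := Or.inr h

lemma leP_trans {k : ℕ} {a b c : S.F (k + 1)} (h1 : S.leP a b) (h2 : S.leP b c) :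
    S.leP a c := by
  rcases h1 with rfl | h1
  · exact h2
  rcases h2 with rfl | h2
  · exact Or.inr h1
  · exact Or.inr (ltP_trans h1 h2)

lemma leP_ltP_trans {k : ℕ} {a b c : S.F (k + 1)} (h1 : S.leP a b) (h2 : S.ltP b c) :
    S.ltP a c := by
  rcases h1 with rfl | h1
  · exact h2
  · exact ltP_trans h1 h2

lemma ltP_leP_trans {k : ℕ} {a b c : S.F (k + 1)} (h1 : S.ltP a b) (h2 : S.leP b c) :
    S.ltP a c := by
  rcases h2 with rfl | h2
  · exact h1
  · exact ltP_trans h1 h2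

lemma leP_antisymm (hS : IsOFS S) {k : ℕ} {a b : S.F (k + 1)} (h1 : S.leP a b)
    (h2 : S.leP b a) : a = b := by
  rcases h1 with rfl | h1
  · rfl
  rcases h2 with rfl | h2
  · rfl
  · exact absurd (ltP_trans h1 h2) (hS.strictP a)

lemma ltP_asymm (hS : IsOFS S) {k : ℕ} {a b : S.F (k + 1)} (h1 : S.ltP a b) :
    ¬ S.ltP b a := fun h2 => hS.strictP a (ltP_trans h1 h2)

lemma ltP_ne (hS : IsOFS S) {k : ℕ} {a b : S.F (k + 1)} (h1 : S.ltP a b) : a ≠ b := by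
  rintro rfl; exact hS.strictP a h1

/-- If the codomain of `a` is in its domain, then `a` is a loop. -/
lemma loop_of_gamma_mem_delta (hS : IsOFS S) {k : ℕ} {a : S.F (k + 2)}
    (h : Sum.inl (S.γ a) ∈ S.δ a) : S.isLoop a := by
  by_contra hl
  exact hS.strictP (S.γ a) (ltP_single ⟨a, hl, h, rfl⟩)

/-- Well-foundedness of `>⁺` on each (finite) dimension. -/
lemma wf_gtP (hS : IsOFS S) {k : ℕ} :
    WellFounded (fun s t : S.F (k + 1) => S.ltP t s) := by
  have := hS.fin (k + 1)
  have htr : IsTrans (S.F (k + 1)) (fun s t : S.F (k + 1) => S.ltP t s) :=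
    ⟨fun a b c h1 h2 => ltP_trans h2 h1⟩
  have hir : IsIrrefl (S.F (k + 1)) (fun s t : S.F (k + 1) => S.ltP t s) :=
    ⟨fun a => hS.strictP a⟩
  exact Finite.wellFounded_of_trans_of_irrefl _

lemma wf_ltP (hS : IsOFS S) {k : ℕ} :
    WellFounded (fun s t : S.F (k + 1) => S.ltP s t) := by
  have := hS.fin (k + 1)
  have htr : IsTrans (S.F (k + 1)) (fun s t : S.F (k + 1) => S.ltP s t) :=
    ⟨fun a b c h1 h2 => ltP_trans h1 h2⟩
  have hir : IsIrrefl (S.F (k + 1)) (fun s t : S.F (k + 1) => S.ltP s t) :=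
    ⟨fun a => hS.strictP a⟩
  exact Finite.wellFounded_of_trans_of_irrefl _

end PreOFS
namespace PreOFS

open Relation Set

variable {S T : PreOFS}

lemma map_stepRel {f : ∀ k, S.F k → T.F k} (hf : IsOFSHom S T f)
    {k : ℕ} {u v : S.F (k + 1)} (h : S.stepRel u v) :
    T.leP (f (k + 1) u) (f (k + 1) v) := by
  obtain ⟨α, hnl, hmem, hγ⟩ := h
  have hu : f (k + 1) u ∈ T.realDom (f (k + 2) α) := (hf.map_dom α).mapsTo hmem
  have hγ' : T.γ (f (k + 2) α) = f (k + 1) v := by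
    rw [← hf.map_γ α, hγ]
  by_cases hl : T.isLoop (f (k + 2) α)
  · have h2 : Sum.inl (f (k + 1) u) ∈ ({Sum.inl (T.γ (f (k + 2) α))} :
      Set (T.F (k + 1) ⊕ T.F k)) := hl ▸ hu
    rw [Set.mem_singleton_iff] at h2
    exact Or.inl (by rw [← hγ']; exact Sum.inl.inj h2)
  · exact Or.inr (ltP_single ⟨f (k + 2) α, hl, hu, hγ'⟩)

lemma map_ltP_leP {f : ∀ k, S.F k → T.F k} (hf : IsOFSHom S T f)
    {k : ℕ} {u v : S.F (k + 1)} (h : S.ltP u v) :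
    T.leP (f (k + 1) u) (f (k + 1) v) := by
  induction h with
  | single h => exact map_stepRel hf h
  | tail _ h ih => exact leP_trans ih (map_stepRel hf h)

lemma map_reflTransGen_leP {f : ∀ k, S.F k → T.F k} (hf : IsOFSHom S T f)
    {k : ℕ} {u v : S.F (k + 1)}
    (h : Relation.ReflTransGen (S.stepRel (k := k)) u v) :
    T.leP (f (k + 1) u) (f (k + 1) v) := by
  induction h with
  | refl => exact leP_refl _
  | tail _ h ih => exact leP_trans ih (map_stepRel hf h)

/-- One `ltM`-step pushes codomains up (weakly). -/
lemma gamma_leP_of_mem_delta {k : ℕ} {u v : S.F (k + 2)}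
    (h : Sum.inl (S.γ u) ∈ S.δ v) : S.leP (S.γ u) (S.γ v) := by
  by_cases hl : S.isLoop v
  · have h2 : Sum.inl (S.γ u) ∈ ({Sum.inl (S.γ v)} : Set (S.F (k + 1) ⊕ S.F k)) := hl ▸ h
    rw [Set.mem_singleton_iff] at h2
    exact Or.inl (Sum.inl.inj h2)
  · exact Or.inr (ltP_single ⟨v, hl, h, rfl⟩)

lemma ltM_gamma_leP {k : ℕ} {u v : S.F (k + 2)} (h : S.ltM u v) :
    S.leP (S.γ u) (S.γ v) := by
  induction h with
  | single h => exact gamma_leP_of_mem_delta h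
  | tail _ h ih => exact leP_trans ih (gamma_leP_of_mem_delta h)

/-- The last step of an `ltM`-chain. -/
lemma ltM_last {k : ℕ} {u v : S.F (k + 2)} (h : S.ltM u v) :
    ∃ s, Sum.inl s ∈ S.δ v ∧ S.leP (S.γ u) s := by
  rw [ltM, Relation.transGen_iff] at h
  rcases h with h | ⟨w, hw, h⟩
  · exact ⟨S.γ u, h, leP_refl _⟩
  · exact ⟨S.γ w, h, ltM_gamma_leP hw⟩

end PreOFS
namespace PreOFS

open Relation Set

variable {S T : PreOFS}

/-- Each codomain of a generalized face of `δ(Φ)` is `≤⁺ γγΦ`. -/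
lemma cods_leP (hS : IsOFS S) {k : ℕ} (Φ : S.F (k + 3)) :
    ∀ t, (∃ E ∈ S.δ Φ, S.cod E = t) → S.leP t (S.γ (S.γ Φ)) := by
  intro t
  induction t using (wf_gtP hS).induction with
  | _ t ih =>
  intro ht
  by_cases he : t = S.γ (S.γ Φ)
  · exact he ▸ leP_refl _
  have hglob := hS.glob_γ Φ
  have hmem : t ∉ ({S.γ (S.γ Φ)} : Set (S.F (k + 1))) := by
    simpa using he
  rw [hglob] at hmem
  have hint : t ∈ ⋃ x ∈ S.nlDom Φ, S.realDom x := by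
    by_contra hc
    exact hmem ⟨ht, hc⟩
  obtain ⟨w, hw, htw⟩ := by simpa using hint
  have hstep : S.ltP t (S.γ w) := ltP_single ⟨w, hw.2, htw, rfl⟩
  have hrec : S.leP (S.γ w) (S.γ (S.γ Φ)) :=
    ih (S.γ w) hstep ⟨Sum.inl w, hw.1, rfl⟩
  exact leP_trans (ltP_leP hstep) hrec

/-- `γ` is monotone with respect to `<⁺` (one step). -/
lemma gamma_leP_of_stepRel (hS : IsOFS S) {k : ℕ} {u v : S.F (k + 2)}
    (h : S.stepRel u v) : S.leP (S.γ u) (S.γ v) := by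
  obtain ⟨Φ, _, hmem, hγ⟩ := h
  have := cods_leP hS Φ (S.γ u) ⟨Sum.inl u, hmem, rfl⟩
  rwa [hγ] at this

/-- `γ` is monotone with respect to `<⁺`. -/
lemma gamma_leP_of_ltP (hS : IsOFS S) {k : ℕ} {u v : S.F (k + 2)}
    (h : S.ltP u v) : S.leP (S.γ u) (S.γ v) := by
  induction h with
  | single h => exact gamma_leP_of_stepRel hS h
  | tail _ h ih => exact leP_trans ih (gamma_leP_of_stepRel hS h)

/-- Nothing is `<⁺`-below a face that is not the codomain of a non-loop. -/
lemma no_ltP_to {k : ℕ} {B : S.F (k + 2)}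
    (hB : ¬ ∃ Φ : S.F (k + 3), ¬ S.isLoop Φ ∧ S.γ Φ = B) {x : S.F (k + 2)} :
    ¬ S.ltP x B := by
  intro h
  rw [ltP_eq_transGen, Relation.TransGen.tail'_iff] at h
  obtain ⟨w, _, Φ, hnl, _, hγ⟩ := h
  exact hB ⟨Φ, hnl, hγ⟩

/-- Globularity for domains, genuine faces, uniform in the dimension. -/
lemma delta_gamma_mem_iff (hS : IsOFS S) {k : ℕ} (Φ : S.F (k + 3)) (x : S.F (k + 1)) :
    Sum.inl x ∈ S.δ (S.γ Φ) ↔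
      (∃ E ∈ S.δ Φ, Sum.inl x ∈ S.domM E) ∧ ∀ w ∈ S.nlDom Φ, S.γ w ≠ x := by
  cases k with
  | zero =>
    have h := hS.glob_δ_low Φ
    have h2 := Set.ext_iff.mp h x
    simp only [realDom, Set.mem_setOf_eq, Set.mem_diff, Set.mem_iUnion] at h2
    constructor
    · intro hx
      obtain ⟨⟨e, he, hxe⟩, hni⟩ := h2.mp hx
      exact ⟨⟨e, he, hxe⟩, fun w hw hγw => hni ⟨w, hw, hγw⟩⟩
    · rintro ⟨⟨e, he, hxe⟩, hni⟩
      exact h2.mpr ⟨⟨e, he, hxe⟩, fun ⟨w, hw, hγw⟩ => hni w hw hγw⟩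
  | succ k =>
    have h := (hS.glob_δ Φ).1
    have h2 := Set.ext_iff.mp h x
    simp only [Set.mem_setOf_eq, Set.mem_diff, Set.mem_iUnion] at h2
    constructor
    · intro hx
      obtain ⟨⟨e, he, hxe⟩, hni⟩ := h2.mp hx
      exact ⟨⟨e, he, hxe⟩, fun w hw hγw => hni ⟨w, hw, by rw [hγw]⟩⟩
    · rintro ⟨⟨e, he, hxe⟩, hni⟩
      exact h2.mpr ⟨⟨e, he, hxe⟩, fun ⟨w, hw, hγw⟩ => hni w hw (Sum.inl.inj hγw)⟩

end PreOFS
namespace PreOFS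

open Relation Set

variable {S T : PreOFS}

/-- A `<⁺`-step through a face of the domain of `Φ`. -/
def stepIn (S : PreOFS) {k : ℕ} (Φ : S.F (k + 3)) (x y : S.F (k + 1)) : Prop :=
  ∃ e : S.F (k + 2), ¬ S.isLoop e ∧ Sum.inl e ∈ S.δ Φ ∧ Sum.inl x ∈ S.δ e ∧ S.γ e = y

lemma stepIn_stepRel {k : ℕ} {Φ : S.F (k + 3)} {x y : S.F (k + 1)}
    (h : S.stepIn Φ x y) : S.stepRel x y := by
  obtain ⟨e, h1, _, h3, h4⟩ := h
  exact ⟨e, h1, h3, h4⟩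

/-- The path lemma: if `γΦ` is unary with domain `u` and codomain `v ≠ u`, then
there is an upper path from `u` to `v` through the domain of `Φ`. -/
lemma chase (hS : IsOFS S) {k : ℕ} (Φ : S.F (k + 3)) {u v : S.F (k + 1)}
    (hδ : S.δ (S.γ Φ) = {Sum.inl u}) (hγγ : S.γ (S.γ Φ) = v) (huv : u ≠ v) :
    Relation.TransGen (S.stepIn Φ) u v := by
  have main : ∀ t, (∃ E ∈ S.δ Φ, S.cod E = t) →
      Relation.ReflTransGen (S.stepIn Φ) u t →
      Relation.TransGen (S.stepIn Φ) u v := by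
    intro t
    induction t using (wf_gtP hS).induction with
    | _ t ih =>
    intro hcod hpath
    by_cases he : t = v
    · subst he
      rcases Relation.reflTransGen_iff_eq_or_transGen.mp hpath with rfl | h
      · exact absurd rfl huv
      · exact h
    have hmem : t ∉ ({S.γ (S.γ Φ)} : Set (S.F (k + 1))) := by
      simp [hγγ, he]
    rw [hS.glob_γ Φ] at hmem
    have hint : t ∈ ⋃ x ∈ S.nlDom Φ, S.realDom x := by
      by_contra hc
      exact hmem ⟨hcod, hc⟩
    obtain ⟨w, hw, htw⟩ := by simpa using hint
    have hstep : S.stepIn Φ t (S.γ w) := ⟨w, hw.2, hw.1, htw, rfl⟩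
    exact ih (S.γ w) (ltP_single ⟨w, hw.2, htw, rfl⟩) ⟨Sum.inl w, hw.1, rfl⟩
      (hpath.tail hstep)
  have hu : Sum.inl u ∈ S.δ (S.γ Φ) := by rw [hδ]; rfl
  obtain ⟨⟨E, hE, huE⟩, -⟩ := (delta_gamma_mem_iff hS Φ u).mp hu
  cases E with
  | inl e₀ =>
    by_cases hl : S.isLoop e₀
    · have : Sum.inl u ∈ ({Sum.inl (S.γ e₀)} : Set (S.F (k + 1) ⊕ S.F k)) := by
        rw [← hl]; exact huE
      rw [Set.mem_singleton_iff] at this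
      have hue : u = S.γ e₀ := Sum.inl.inj this
      exact main u ⟨Sum.inl e₀, hE, hue.symm⟩ Relation.ReflTransGen.refl
    · exact main (S.γ e₀) ⟨Sum.inl e₀, hE, rfl⟩
        (Relation.ReflTransGen.single ⟨e₀, hl, hE, huE, rfl⟩)
  | inr w =>
    have huw : u = w := by
      have : Sum.inl u ∈ ({Sum.inl w} : Set (S.F (k + 1) ⊕ S.F k)) := huE
      rw [Set.mem_singleton_iff] at this
      exact Sum.inl.inj this
    have hδΦ : S.δ Φ = {Sum.inr w} := hS.dom_eps Φ w hE
    have hv : v ∈ ({S.γ (S.γ Φ)} : Set (S.F (k + 1))) := by simp [hγγ]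
    rw [hS.glob_γ Φ] at hv
    obtain ⟨⟨E', hE', hcE'⟩, -⟩ := hv
    rw [hδΦ, Set.mem_singleton_iff] at hE'
    subst hE'
    exact absurd (huw.trans hcE') huv

/-- If there is no fibre element strictly between `u` and `v`, an `r`-path
from `u` to `v` (where `r` refines one-step `<⁺`) must be a single `r`-step. -/
lemma last_step_direct (hS : IsOFS S) (hT : IsOFS T)
    {f : ∀ k, S.F k → T.F k} (hf : IsOFSHom S T f)
    {k : ℕ} {a : T.F (k + 1)} {u v : S.F (k + 1)}
    (r : S.F (k + 1) → S.F (k + 1) → Prop)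
    (hsub : ∀ x y, r x y → S.stepRel x y)
    (hTG : Relation.TransGen r u v)
    (hu : f (k + 1) u = a) (hv : f (k + 1) v = a)
    (hcons : ∀ w, f (k + 1) w = a → ¬ (S.ltP u w ∧ S.ltP w v)) : r u v := by
  rw [Relation.TransGen.tail'_iff] at hTG
  obtain ⟨w, hpath, hlast⟩ := hTG
  by_cases huw : u = w
  · exact huw ▸ hlast
  have hpath' : Relation.ReflTransGen (S.stepRel (k := k)) u w := Relation.ReflTransGen.mono hsub _ _ hpath
  have hltuw : S.ltP u w := by
    rcases Relation.reflTransGen_iff_eq_or_transGen.mp hpath' with h | h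
    · exact absurd h.symm huw
    · exact h
  have hltwv : S.ltP w v := ltP_single (hsub _ _ hlast)
  have hfw : f (k + 1) w = a := by
    have h1 : T.leP a (f (k + 1) w) := hu ▸ map_reflTransGen_leP hf hpath'
    have h2 : T.leP (f (k + 1) w) a := hv ▸ map_stepRel hf (hsub _ _ hlast)
    exact (leP_antisymm hT h2 h1)
  exact absurd ⟨hltuw, hltwv⟩ (hcons w hfw)

end PreOFS
namespace PreOFS

open Relation Set

variable {S T : PreOFS}

/-- Sorting a finite set that is totally ordered by a strict order. -/
lemma sort_aux {α : Type} [Finite α] (R : α → α → Prop)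
    (htrans : ∀ {a b c}, R a b → R b c → R a c) (hirr : ∀ a, ¬ R a a) :
    ∀ (n : ℕ) (A : Set α), A.ncard ≤ n →
      (∀ x ∈ A, ∀ y ∈ A, x = y ∨ R x y ∨ R y x) → A.Nonempty →
      ∃ (r : ℕ) (z : Fin (r + 1) → α), (∀ m, z m ∈ A) ∧ (∀ x ∈ A, ∃ m, z m = x) ∧
        ∀ m m' : Fin (r + 1), m < m' → R (z m) (z m') := by
  have hwf : WellFounded R := by
    have htr : IsTrans α R := ⟨fun a b c => htrans⟩
    have hir : IsIrrefl α R := ⟨hirr⟩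
    exact Finite.wellFounded_of_trans_of_irrefl _
  intro n
  induction n with
  | zero =>
    intro A hcard _ hA
    have h0 : A = ∅ := (Set.ncard_eq_zero A.toFinite).mp (by omega)
    rw [h0] at hA
    exact absurd hA (by simp)
  | succ n ih =>
    intro A hcard htot hA
    obtain ⟨z₀, hz₀A, hmin⟩ := hwf.has_min A hA
    by_cases hA' : (A \ {z₀}).Nonempty
    · have hAfin : A.Finite := A.toFinite
      have hlt : (A \ {z₀}).ncard < A.ncard :=
        Set.ncard_diff_singleton_lt_of_mem hz₀A hAfin
      obtain ⟨r', z', hz'A, hsurj', hmono'⟩ := ih (A \ {z₀})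
        (by omega) (fun x hx y hy => htot x hx.1 y hy.1) hA'
      refine ⟨r' + 1, Fin.cases z₀ z', ?_, ?_, ?_⟩
      · intro m
        induction m using Fin.cases with
        | zero => simpa using hz₀A
        | succ i => simpa using (hz'A i).1
      · intro x hx
        by_cases hxz : x = z₀
        · exact ⟨0, by simpa using hxz.symm⟩
        · obtain ⟨i, hi⟩ := hsurj' x ⟨hx, hxz⟩
          exact ⟨i.succ, by simpa using hi⟩
      · intro m m' hmm'
        have hm'0 : m' ≠ 0 := by
          rintro rfl
          exact absurd hmm' (by simp [Fin.lt_def])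
        obtain ⟨i', rfl⟩ := Fin.eq_succ_of_ne_zero hm'0
        induction m using Fin.cases with
        | zero =>
          simp only [Fin.cases_zero, Fin.cases_succ]
          have hi'A := hz'A i'
          rcases htot z₀ hz₀A (z' i') hi'A.1 with h | h | h
          · exact absurd h.symm hi'A.2
          · exact h
          · exact absurd h (hmin _ hi'A.1)
        | succ i =>
          simp only [Fin.cases_succ]
          exact hmono' i i' (by
            have := hmm'
            simp only [Fin.lt_def, Fin.val_succ] at this ⊢
            omega)
    · refine ⟨0, fun _ => z₀, fun _ => hz₀A, ?_, ?_⟩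
      · intro x hx
        refine ⟨0, ?_⟩
        by_contra hxz
        exact hA' ⟨x, hx, fun h => hxz (by simpa using h.symm)⟩
      · intro m m' h
        have : (m : ℕ) < (m' : ℕ) := h
        omega
end PreOFS
namespace PreOFS

open Relation Set

/-- The structure of a fibre of a monotone morphism: a linear chain joined by
unary non-loop faces that are not codomains of non-loops. -/
structure ChainData (S T : PreOFS) (f : ∀ k, S.F k → T.F k) (k : ℕ) (a : T.F (k + 1)) where
  r : ℕ
  z : Fin (r + 1) → S.F (k + 1)
  β : Fin r → S.F (k + 2)
  hz : ∀ m, f (k + 1) (z m) = a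
  hsurj : ∀ x, f (k + 1) x = a → ∃ m, z m = x
  hmono : ∀ m m' : Fin (r + 1), m < m' → S.ltP (z m) (z m')
  hδ : ∀ m : Fin r, S.δ (β m) = {Sum.inl (z m.castSucc)}
  hγ : ∀ m : Fin r, S.γ (β m) = z m.succ
  hnl : ∀ m : Fin r, ¬ S.isLoop (β m)
  hnofill : ∀ m : Fin r, ¬ ∃ Φ : S.F (k + 3), ¬ S.isLoop Φ ∧ S.γ Φ = β m

variable {S T : PreOFS}

lemma ChainData.index_lt {f : ∀ k, S.F k → T.F k} {k : ℕ} {a : T.F (k + 1)}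
    (C : ChainData S T f k a) (hS : IsOFS S) {s t : Fin (C.r + 1)}
    (h : S.ltP (C.z s) (C.z t)) : s < t := by
  rcases lt_trichotomy s t with h' | rfl | h'
  · exact h'
  · exact absurd h (hS.strictP _)
  · exact absurd (ltP_trans h (C.hmono _ _ h')) (hS.strictP _)

lemma buildChain (hS : IsOFS S) (hT : IsOFS T)
    {f : ∀ k, S.F k → T.F k} (hf : IsOFSHom S T f)
    {k : ℕ} (a : T.F (k + 1)) (hne : ∃ x, f (k + 1) x = a)
    (comp : ∀ x y, f (k + 1) x = a → f (k + 1) y = a →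
      x = y ∨ S.ltP x y ∨ S.ltP y x) :
    Nonempty (ChainData S T f k a) := by
  have hfin : Finite (S.F (k + 1)) := hS.fin (k + 1)
  obtain ⟨r, z, hzA, hsurj, hmono⟩ := sort_aux (S.ltP (k := k))
    (fun h1 h2 => ltP_trans h1 h2) (fun x => hS.strictP x)
    ({x | f (k + 1) x = a}).ncard {x | f (k + 1) x = a} le_rfl
    (fun x hx y hy => comp x y hx hy) hne
  -- no fibre element lies strictly between consecutive entries of `z`
  have hcons : ∀ m : Fin r, ∀ w, f (k + 1) w = a →
      ¬ (S.ltP (z m.castSucc) w ∧ S.ltP w (z m.succ)) := by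
    rintro m w hw ⟨h1, h2⟩
    obtain ⟨t, rfl⟩ := hsurj w hw
    have ht1 : m.castSucc < t := by
      rcases lt_trichotomy m.castSucc t with h' | rfl | h'
      · exact h'
      · exact absurd h1 (hS.strictP _)
      · exact absurd (ltP_trans h1 (hmono _ _ h')) (hS.strictP _)
    have ht2 : t < m.succ := by
      rcases lt_trichotomy t m.succ with h' | rfl | h'
      · exact h'
      · exact absurd h2 (hS.strictP _)
      · exact absurd (ltP_trans h2 (hmono _ _ h')) (hS.strictP _)
    have := ht1.trans ht2
    simp only [Fin.lt_def, Fin.coe_castSucc, Fin.val_succ] at ht1 ht2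
    omega
  have key : ∀ m : Fin r, ∃ β : S.F (k + 2),
      S.δ β = {Sum.inl (z m.castSucc)} ∧ S.γ β = z m.succ ∧ ¬ S.isLoop β ∧
      ¬ ∃ Φ : S.F (k + 3), ¬ S.isLoop Φ ∧ S.γ Φ = β := by
    intro m
    have hstep : S.ltP (z m.castSucc) (z m.succ) :=
      hmono _ _ Fin.castSucc_lt_succ
    have hune : z m.castSucc ≠ z m.succ := ltP_ne hS hstep
    -- the set of one-step witnesses
    set W : Set (S.F (k + 2)) := {Ψ | ¬ S.isLoop Ψ ∧
      Sum.inl (z m.castSucc) ∈ S.δ Ψ ∧ S.γ Ψ = z m.succ} with hW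
    have hWne : W.Nonempty := by
      have := last_step_direct hS hT hf (S.stepRel (k := k)) (fun _ _ h => h)
        hstep (hzA m.castSucc) (hzA m.succ) (hcons m)
      obtain ⟨Ψ, h1, h2, h3⟩ := this
      exact ⟨Ψ, h1, h2, h3⟩
    have hfin2 : Finite (S.F (k + 2)) := hS.fin (k + 2)
    obtain ⟨Ψ₀, hΨ₀W, hΨ₀min⟩ := (wf_ltP hS).has_min W hWne
    -- Ψ₀ is unary
    have hγf : T.γ (f (k + 2) Ψ₀) = a := by
      rw [← hf.map_γ Ψ₀, hΨ₀W.2.2, hzA m.succ]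
    have hmemf : f (k + 1) (z m.castSucc) ∈ T.realDom (f (k + 2) Ψ₀) :=
      (hf.map_dom Ψ₀).mapsTo hΨ₀W.2.1
    have hloopf : T.isLoop (f (k + 2) Ψ₀) := by
      apply loop_of_gamma_mem_delta hT
      rw [hγf, ← hzA m.castSucc]
      exact hmemf
    have hrdf : T.realDom (f (k + 2) Ψ₀) = {a} := by
      rw [isLoop] at hloopf
      ext x
      simp only [realDom, Set.mem_setOf_eq, hloopf, Set.mem_singleton_iff, hγf]
      constructor
      · intro h; exact Sum.inl.inj h
      · intro h; rw [h]
    have hrd : S.realDom Ψ₀ = {z m.castSucc} := by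
      ext x
      simp only [Set.mem_singleton_iff]
      constructor
      · intro hx
        have hfx : f (k + 1) x ∈ T.realDom (f (k + 2) Ψ₀) := (hf.map_dom Ψ₀).mapsTo hx
        rw [hrdf, Set.mem_singleton_iff] at hfx
        exact (hf.map_dom Ψ₀).injOn hx hΨ₀W.2.1 (by rw [hfx, hzA m.castSucc])
      · intro hx; rw [hx]; exact hΨ₀W.2.1
    have hδΨ₀ : S.δ Ψ₀ = {Sum.inl (z m.castSucc)} := by
      ext E
      cases E with
      | inl x =>
        have := Set.ext_iff.mp hrd x
        simpa [realDom] using this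
      | inr w =>
        simp only [Set.mem_singleton_iff]
        constructor
        · intro hw
          have := hS.dom_eps Ψ₀ w hw
          have h2 : Sum.inl (z m.castSucc) ∈ ({Sum.inr w} :
              Set (S.F (k + 1) ⊕ S.F k)) := this ▸ hΨ₀W.2.1
          simp at h2
        · intro h; simp at h
    refine ⟨Ψ₀, hδΨ₀, hΨ₀W.2.2, hΨ₀W.1, ?_⟩
    rintro ⟨Φ, hΦnl, hΦγ⟩
    have hchase : Relation.TransGen (S.stepIn Φ) (z m.castSucc) (z m.succ) := by
      apply chase hS Φ
      · rw [hΦγ]; exact hδΨ₀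
      · rw [hΦγ]; exact hΨ₀W.2.2
      · exact hune
    have := last_step_direct hS hT hf (S.stepIn Φ) (fun _ _ h => stepIn_stepRel h)
      hchase (hzA m.castSucc) (hzA m.succ) (hcons m)
    obtain ⟨e, henl, heΦ, hue, hγe⟩ := this
    have heW : e ∈ W := ⟨henl, hue, hγe⟩
    exact hΨ₀min e heW (ltP_single ⟨Φ, hΦnl, heΦ, hΦγ⟩)
  choose β h1 h2 h3 h4 using key
  exact ⟨⟨r, z, β, fun m => hzA m, hsurj, hmono, h1, h2, h3, h4⟩⟩

end PreOFS
namespace PreOFS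

open Relation Set

variable {S T : PreOFS}

/-- The pencil at the unary face `B` forces `u <∼ B` whenever `γ u` is the
domain of `B`. -/
lemma forced_sim (hS : IsOFS S) {k : ℕ} {u B : S.F (k + 2)} {w v' : S.F (k + 1)}
    (hδB : S.δ B = {Sum.inl w}) (hγB : S.γ B = v')
    (hnofill : ¬ ∃ Φ : S.F (k + 3), ¬ S.isLoop Φ ∧ S.γ Φ = B)
    (hγu : S.γ u = w) (hwv : S.ltP w v') : S.sim u B := by
  have hwv' : w ≠ v' := ltP_ne hS hwv
  have huB : u ≠ B := by
    rintro rfl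
    exact hwv' (by rw [← hγu, hγB])
  have hmeet : (S.thetaDot u ∩ S.thetaDot B).Nonempty := by
    refine ⟨w, ?_, ?_⟩
    · rw [thetaDot, ← hγu]; exact Set.mem_insert _ _
    · rw [thetaDot]
      have : w ∈ S.realDom B := by rw [realDom, Set.mem_setOf_eq, hδB]; rfl
      exact Set.mem_insert_of_mem _ this
  have hkill : ¬ S.leP v' w := by
    intro hle
    rcases hle with heq | h
    · rw [heq] at hwv; exact hS.strictP w hwv
    · exact hS.strictP w (ltP_trans hwv h)
  rcases hS.pencil₁ u B huB hmeet with (h | h) | (h | h)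
  · exact h
  · exfalso
    have := ltM_gamma_leP (hS.sim_lt_minus B u h)
    rw [hγu, hγB] at this
    exact hkill this
  · exact absurd h (no_ltP_to hnofill)
  · exfalso
    have := gamma_leP_of_ltP hS h
    rw [hγu, hγB] at this
    exact hkill this

/-- No face with the same codomain as the unary `B` can be `<∼`-below `B`. -/
lemma kill_sim_into (hS : IsOFS S) {k : ℕ} {u B : S.F (k + 2)} {w : S.F (k + 1)}
    (hδB : S.δ B = {Sum.inl w}) (hγu : S.γ u = S.γ B)
    (hwγ : S.ltP w (S.γ B)) : ¬ S.sim u B := by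
  intro hsim
  obtain ⟨s, hs, hles⟩ := ltM_last (hS.sim_lt_minus u B hsim)
  rw [hδB, Set.mem_singleton_iff] at hs
  have hsw : s = w := Sum.inl.inj hs
  rw [hsw, hγu] at hles
  rcases hles with h | h
  · exact hS.strictP w (h ▸ hwγ)
  · exact hS.strictP w (ltP_trans hwγ h)

end PreOFS
namespace PreOFS

open Relation Set

variable {S T : PreOFS}

lemma gammaEq_aux (hS : IsOFS S) (hT : IsOFS T)
    {f : ∀ k, S.F k → T.F k} (hf : IsOFSHom S T f)
    {k : ℕ} {a : T.F (k + 2)} (C : ChainData S T f k (T.γ a))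
    {x y : S.F (k + 2)} (hx : f (k + 2) x = a) (hy : f (k + 2) y = a)
    {i j : Fin (C.r + 1)} (hzi : C.z i = S.γ x) (hzj : C.z j = S.γ y)
    (hij : i < j) : False := by
  have hijv : (i : ℕ) < (j : ℕ) := hij
  have hjr : (j : ℕ) ≤ C.r := Nat.lt_succ_iff.mp j.isLt
  -- generic pencil step
  have step_sim : ∀ (m : Fin C.r) (u : S.F (k + 2)), S.γ u = C.z m.castSucc →
      S.sim u (C.β m) := by
    intro m u hγu
    exact forced_sim hS (C.hδ m) (C.hγ m) (C.hnofill m) hγu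
      (C.hmono _ _ Fin.castSucc_lt_succ)
  -- the chain of sims from x up the connecting faces
  have simchain : ∀ (t : ℕ) (ht : t < C.r), (i : ℕ) ≤ t → t < (j : ℕ) →
      S.sim x (C.β ⟨t, ht⟩) := by
    intro t
    induction t using Nat.strong_induction_on with
    | _ t ih =>
      intro ht hit htj
      rcases Nat.eq_or_lt_of_le hit with heq | hlt
      · apply step_sim ⟨t, ht⟩ x
        rw [← hzi]
        congr 1
        ext
        simpa using heq
      · have ht1 : t - 1 < C.r := by omega
        have h1 : S.sim x (C.β ⟨t - 1, ht1⟩) :=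
          ih (t - 1) (by omega) ht1 (by omega) (by omega)
        have h2 : S.sim (C.β ⟨t - 1, ht1⟩) (C.β ⟨t, ht⟩) := by
          apply step_sim ⟨t, ht⟩ (C.β ⟨t - 1, ht1⟩)
          rw [C.hγ ⟨t - 1, ht1⟩]
          congr 1
          ext
          simp
          omega
        exact hS.sim_trans _ _ _ h1 h2
  have hj1 : (j : ℕ) - 1 < C.r := by omega
  set B : S.F (k + 2) := C.β ⟨(j : ℕ) - 1, hj1⟩ with hB
  have hsimx : S.sim x B := simchain ((j : ℕ) - 1) hj1 (by omega) (by omega)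
  have hsucc : (⟨(j : ℕ) - 1, hj1⟩ : Fin C.r).succ = j := by
    ext; simp; omega
  have hγB : S.γ B = C.z j := by rw [hB, C.hγ, hsucc]
  have hγyB : S.γ y = S.γ B := by rw [hγB, hzj]
  have hcontr : ¬ S.sim x y := by
    intro h
    have := hf.map_sim x y h
    rw [hx, hy] at this
    exact hT.sim_irrefl a this
  by_cases hyB : y = B
  · exact hcontr (hyB ▸ hsimx)
  have hmeet : (S.thetaDot y ∩ S.thetaDot B).Nonempty := by
    refine ⟨S.γ y, Set.mem_insert _ _, ?_⟩
    rw [hγyB]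
    exact Set.mem_insert _ _
  rcases hS.pencil₁ y B hyB hmeet with (h | h) | (h | h)
  · refine kill_sim_into hS (C.hδ ⟨(j : ℕ) - 1, hj1⟩) hγyB ?_ h
    rw [C.hγ]
    exact C.hmono _ _ Fin.castSucc_lt_succ
  · exact hcontr (hS.sim_trans _ _ _ hsimx h)
  · exact no_ltP_to (C.hnofill _) h
  · have hTl : T.leP (f (k + 2) B) a := by
      have := map_ltP_leP hf h
      rwa [hy] at this
    have hTs : T.sim a (f (k + 2) B) := by
      have := hf.map_sim x B hsimx
      rwa [hx] at this
    rcases hTl with heq | hlt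
    · rw [heq] at hTs
      exact hT.sim_irrefl a hTs
    · exact hT.disj a (f (k + 2) B) (Or.inl hTs) (Or.inr hlt)

/-- All elements of a fibre have the same codomain. -/
lemma fibre_gamma_eq (hS : IsOFS S) (hT : IsOFS T)
    {f : ∀ k, S.F k → T.F k} (hf : IsOFSHom S T f)
    {k : ℕ} {a : T.F (k + 2)} (C : ChainData S T f k (T.γ a))
    {x y : S.F (k + 2)} (hx : f (k + 2) x = a) (hy : f (k + 2) y = a) :
    S.γ x = S.γ y := by
  obtain ⟨i, hzi⟩ := C.hsurj (S.γ x) (by rw [hf.map_γ x, hx])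
  obtain ⟨j, hzj⟩ := C.hsurj (S.γ y) (by rw [hf.map_γ y, hy])
  rcases lt_trichotomy i j with h | h | h
  · exact absurd (gammaEq_aux hS hT hf C hx hy hzi hzj h) (fun h => h)
  · rw [← hzi, h, hzj]
  · exact absurd (gammaEq_aux hS hT hf C hy hx hzj hzi h) (fun h => h)

end PreOFS
namespace PreOFS

open Relation Set

variable {S T : PreOFS}

/-- Main recursion: every nonempty fibre carries a chain structure. -/
lemma theChain (hS : IsOFS S) (hT : IsOFS T)
    {f : ∀ k, S.F k → T.F k} (hf : IsOFSHom S T f) :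
    ∀ (k : ℕ) (a : T.F (k + 1)), (∃ x, f (k + 1) x = a) →
      Nonempty (ChainData S T f k a) := by
  intro k
  induction k with
  | zero =>
    intro a hne
    exact buildChain hS hT hf a hne (fun x y _ _ => hS.linearP₀ x y)
  | succ k ihk =>
    intro a hne
    apply buildChain hS hT hf a hne
    intro x y hx hy
    by_cases hxy : x = y
    · exact Or.inl hxy
    obtain ⟨C⟩ := ihk (T.γ a) ⟨S.γ x, by rw [hf.map_γ x, hx]⟩
    have hγeq : S.γ x = S.γ y := fibre_gamma_eq hS hT hf C hx hy
    have hmeet : (S.thetaDot x ∩ S.thetaDot y).Nonempty :=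
      ⟨S.γ x, Set.mem_insert _ _, by rw [hγeq]; exact Set.mem_insert _ _⟩
    rcases hS.pencil₁ x y hxy hmeet with (h | h) | (h | h)
    · exfalso
      have := hf.map_sim x y h
      rw [hx, hy] at this
      exact hT.sim_irrefl a this
    · exfalso
      have := hf.map_sim y x h
      rw [hx, hy] at this
      exact hT.sim_irrefl a this
    · exact Or.inr (Or.inl h)
    · exact Or.inr (Or.inr h)

/-- Parallelism across a unary face: `γΦ` is parallel to the face in `δΦ`. -/
lemma parallel_step (hS : IsOFS S) {k : ℕ} (Φ : S.F (k + 3)) (u : S.F (k + 2))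
    (hδΦ : S.δ Φ = {Sum.inl u}) :
    S.γ (S.γ Φ) = S.γ u ∧ S.δ (S.γ Φ) = S.δ u := by
  have hnl : ∀ w ∈ S.nlDom Φ, w = u ∧ ¬ S.isLoop w := by
    intro w hw
    obtain ⟨hw1, hw2⟩ := hw
    rw [hδΦ, Set.mem_singleton_iff] at hw1
    exact ⟨Sum.inl.inj hw1, hw2⟩
  have hγu : S.γ (S.γ Φ) = S.γ u := by
    have h2 := Set.ext_iff.mp (hS.glob_γ Φ) (S.γ u)
    have : S.γ u ∈ ({S.γ (S.γ Φ)} : Set (S.F (k + 1))) := by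
      apply h2.mpr
      constructor
      · exact ⟨Sum.inl u, by rw [hδΦ]; rfl, rfl⟩
      · intro hmem
        rw [Set.mem_iUnion] at hmem
        obtain ⟨w, hmem⟩ := hmem
        rw [Set.mem_iUnion] at hmem
        obtain ⟨hw, hmem⟩ := hmem
        obtain ⟨rfl, hwnl⟩ := hnl w hw
        exact hwnl (loop_of_gamma_mem_delta hS hmem)
    rw [Set.mem_singleton_iff] at this
    exact this.symm
  refine ⟨hγu, ?_⟩
  -- genuine faces of the two domains agree
  have hreal : ∀ x : S.F (k + 1), Sum.inl x ∈ S.δ (S.γ Φ) ↔ Sum.inl x ∈ S.δ u := by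
    intro x
    rw [delta_gamma_mem_iff hS Φ x]
    constructor
    · rintro ⟨⟨E, hE, hxE⟩, -⟩
      rw [hδΦ, Set.mem_singleton_iff] at hE
      subst hE
      exact hxE
    · intro hx
      refine ⟨⟨Sum.inl u, by rw [hδΦ]; rfl, hx⟩, ?_⟩
      intro w hw hγw
      obtain ⟨rfl, hwnl⟩ := hnl w hw
      rw [← hγw] at hx
      exact hwnl (loop_of_gamma_mem_delta hS hx)
  cases k with
  | zero =>
    ext E
    cases E with
    | inl x => exact hreal x
    | inr w => exact (hS.empty_bot.elim w)
  | succ k =>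
    have h2 := (hS.glob_δ Φ).2
    have hG := (hS.glob_δ Φ).1
    set R : Set (S.F (k + 2) ⊕ S.F (k + 1)) :=
      (⋃ e ∈ S.δ Φ, S.domM e) \ {e | ∃ x ∈ S.nlDom Φ, Sum.inl (S.γ x) = e} with hR
    have hGu : {x : S.F (k + 2) | Sum.inl x ∈ S.δ (S.γ Φ)} = S.realDom u := by
      ext x
      exact hreal x
    have hBinr : ∀ w : S.F (k + 1), Sum.inr w ∈ R ↔ Sum.inr w ∈ S.δ u := by
      intro w
      constructor
      · rintro ⟨hmem, -⟩
        rw [Set.mem_iUnion] at hmem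
        obtain ⟨E, hmem⟩ := hmem
        rw [Set.mem_iUnion] at hmem
        obtain ⟨hE, hmem⟩ := hmem
        rw [hδΦ, Set.mem_singleton_iff] at hE
        subst hE
        exact hmem
      · intro hw
        constructor
        · rw [Set.mem_iUnion]
          refine ⟨Sum.inl u, ?_⟩
          rw [Set.mem_iUnion]
          exact ⟨by rw [hδΦ]; rfl, hw⟩
        · rintro ⟨x, -, hx⟩
          exact (Sum.inl_ne_inr hx)
    have hAB : ∀ w : S.F (k + 1),
        Sum.inr w ∈ S.δ (S.γ Φ) ↔ Sum.inr w ∈ S.δ u := by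
      intro w
      by_cases hrd : (S.realDom u).Nonempty
      · constructor
        · intro hw
          exfalso
          have hde := hS.dom_eps (S.γ Φ) w hw
          obtain ⟨x, hx⟩ := hrd
          have hx' : Sum.inl x ∈ S.δ (S.γ Φ) := (hreal x).mpr hx
          rw [hde, Set.mem_singleton_iff] at hx'
          exact Sum.inl_ne_inr hx'
        · intro hw
          exfalso
          have hde := hS.dom_eps u w hw
          obtain ⟨x, hx⟩ := hrd
          have hx' : Sum.inl x ∈ S.δ u := hx
          rw [hde, Set.mem_singleton_iff] at hx'
          exact Sum.inl_ne_inr hx'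
      · have hGempty : {x : S.F (k + 2) | Sum.inl x ∈ S.δ (S.γ Φ)} = ∅ := by
          rw [hGu]
          exact Set.not_nonempty_iff_eq_empty.mp hrd
        have hK1 : (⋃ x ∈ {x : S.F (k + 2) | Sum.inl x ∈ S.δ (S.γ Φ)},
            S.thetaDot x) = ∅ := by
          rw [hGempty]; simp
        have hK2 : (⋃ x ∈ {x : S.F (k + 2) | Sum.inl x ∈ R}, S.thetaDot x) = ∅ := by
          rw [← hG, hGempty]; simp
        rw [hK1, Set.union_empty, hK2, Set.union_empty] at h2
        exact (Set.ext_iff.mp h2 w).trans (hBinr w)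
    ext E
    cases E with
    | inl x => exact hreal x
    | inr w => exact hAB w

end PreOFS
namespace PreOFS

open Relation Set

variable {S T : PreOFS}

lemma chain_parallel (hS : IsOFS S) {f : ∀ k, S.F k → T.F k}
    {k : ℕ} {a : T.F (k + 2)} (C : ChainData S T f (k + 1) a) :
    ∀ m m' : Fin (C.r + 1),
      S.γ (C.z m) = S.γ (C.z m') ∧ S.δ (C.z m) = S.δ (C.z m') := by
  have hcons : ∀ m : Fin C.r, S.γ (C.z m.succ) = S.γ (C.z m.castSucc) ∧
      S.δ (C.z m.succ) = S.δ (C.z m.castSucc) := by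
    intro m
    have h := parallel_step hS (C.β m) (C.z m.castSucc) (C.hδ m)
    rw [C.hγ m] at h
    exact h
  have hzero : ∀ (t : ℕ) (ht : t < C.r + 1),
      S.γ (C.z ⟨t, ht⟩) = S.γ (C.z 0) ∧ S.δ (C.z ⟨t, ht⟩) = S.δ (C.z 0) := by
    intro t
    induction t with
    | zero =>
      intro ht
      have h0 : (⟨0, ht⟩ : Fin (C.r + 1)) = 0 := by ext; simp
      rw [h0]
      exact ⟨rfl, rfl⟩
    | succ t iht =>
      intro ht
      have ht' : t < C.r := by omega
      have e1 : (⟨t + 1, ht⟩ : Fin (C.r + 1)) = (⟨t, ht'⟩ : Fin C.r).succ := by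
        ext; simp
      have e2 : (⟨t, by omega⟩ : Fin (C.r + 1)) = (⟨t, ht'⟩ : Fin C.r).castSucc := by
        ext; simp
      rw [e1]
      constructor
      · rw [(hcons ⟨t, ht'⟩).1, ← e2]
        exact (iht (by omega)).1
      · rw [(hcons ⟨t, ht'⟩).2, ← e2]
        exact (iht (by omega)).2
  intro m m'
  have hm := hzero m.val m.isLt
  have hm' := hzero m'.val m'.isLt
  rw [Fin.eta] at hm hm'
  exact ⟨hm.1.trans hm'.1.symm, hm.2.trans hm'.2.symm⟩

end PreOFS
/-- the fibre of a monotone morphism over a face `a` (if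
nonempty) consists of pairwise parallel faces, is linearly ordered by `<⁺`,
and is `{b} ∪ {γ(αᵢ)}` for a flat upper path `b, α₁, …, α_r, c` through unary
faces that are not codomains of non-loops. -/
theorem stmt16 (S T : PreOFS) (hS : IsOFS S) (hT : IsOFS T)
    (f : ∀ k, S.F k → T.F k) (hf : IsOFSHom S T f)
    {k : ℕ} (a : T.F (k + 2)) (hne : ∃ b : S.F (k + 2), f (k + 2) b = a) :
    (∀ b c : S.F (k + 2), f (k + 2) b = a → f (k + 2) c = a →
        S.γ b = S.γ c ∧ S.δ b = S.δ c) ∧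
    (∀ b c : S.F (k + 2), f (k + 2) b = a → f (k + 2) c = a →
        b = c ∨ S.ltP b c ∨ S.ltP c b) ∧
    (∃ b c : S.F (k + 2), f (k + 2) b = a ∧ f (k + 2) c = a ∧
      ∃ r : ℕ, ∃ α : Fin r → S.F (k + 3),
        (∀ i : Fin r,
            (∃ x, S.realDom (α i) = {x}) ∧ ¬ S.isLoop (α i) ∧
              ¬ ∃ β : S.F (k + 4), ¬ S.isLoop β ∧ S.γ β = α i) ∧
        (∀ h : 0 < r, Sum.inl b ∈ S.δ (α ⟨0, h⟩)) ∧
        (∀ (i : ℕ) (h : i + 1 < r),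
            Sum.inl (S.γ (α ⟨i, by omega⟩)) ∈ S.δ (α ⟨i + 1, h⟩)) ∧
        (∀ h : 0 < r, S.γ (α ⟨r - 1, by omega⟩) = c) ∧
        (r = 0 → b = c) ∧
        {x : S.F (k + 2) | f (k + 2) x = a} =
          insert b {y | ∃ i : Fin r, S.γ (α i) = y}) := by
  obtain ⟨C⟩ := PreOFS.theChain hS hT hf (k + 1) a hne
  refine ⟨?_, ?_, ?_⟩
  · -- parallelism
    intro b c hb hc
    obtain ⟨m, hm⟩ := C.hsurj b hb
    obtain ⟨m', hm'⟩ := C.hsurj c hc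
    have h := PreOFS.chain_parallel hS C m m'
    rw [hm, hm'] at h
    exact h
  · -- linearity
    intro b c hb hc
    obtain ⟨m, hm⟩ := C.hsurj b hb
    obtain ⟨m', hm'⟩ := C.hsurj c hc
    rcases lt_trichotomy m m' with h | h | h
    · exact Or.inr (Or.inl (hm ▸ hm' ▸ C.hmono m m' h))
    · exact Or.inl (by rw [← hm, h, hm'])
    · exact Or.inr (Or.inr (hm ▸ hm' ▸ C.hmono m' m h))
  · -- the path
    refine ⟨C.z 0, C.z (Fin.last C.r), C.hz 0, C.hz _, C.r, C.β, ?_, ?_, ?_, ?_, ?_, ?_⟩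
    · intro i
      refine ⟨⟨C.z i.castSucc, ?_⟩, C.hnl i, C.hnofill i⟩
      ext x
      simp [PreOFS.realDom, C.hδ i]
    · intro h
      rw [C.hδ ⟨0, h⟩]
      have : (⟨0, h⟩ : Fin C.r).castSucc = 0 := by ext; simp
      rw [this]
      rfl
    · intro i h
      rw [C.hγ ⟨i, by omega⟩, C.hδ ⟨i + 1, h⟩]
      have : (⟨i, by omega⟩ : Fin C.r).succ = (⟨i + 1, h⟩ : Fin C.r).castSucc := by
        ext; simp
      rw [this]
      rfl
    · intro h
      rw [C.hγ ⟨C.r - 1, by omega⟩]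
      congr 1
      ext
      simp
      omega
    · intro h
      congr 1
      ext
      simp only [Fin.val_last, Fin.val_zero]
      omega
    · ext x
      simp only [Set.mem_setOf_eq, Set.mem_insert_iff]
      constructor
      · intro hx
        obtain ⟨m, hm⟩ := C.hsurj x hx
        by_cases hm0 : (m : ℕ) = 0
        · left
          rw [← hm]
          congr 1
          ext
          simp [hm0]
        · right
          have hmlt : (m : ℕ) - 1 < C.r := by
            have := m.isLt
            omega
          refine ⟨⟨(m : ℕ) - 1, hmlt⟩, ?_⟩
          rw [C.hγ ⟨(m : ℕ) - 1, hmlt⟩, ← hm]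
          congr 1
          ext
          simp
          omega
      · rintro (rfl | ⟨i, rfl⟩)
        · exact C.hz 0
        · rw [C.hγ i]
          exact C.hz i.succ
end

section
/- Let T be a positive face structure and a a face of T of dimension ≥ 1. Then the following are equivalent: (a) γ(a) is unary (|δ(γ(a))| = 1); (b) every face of δ(a) is unary; (c) there is v ∈ δ(γ(a)) and an upper path through unary faces of δ(a) from v to γγ(a). Moreover, the cardinality identity |δ(γ(a))| = 1 + Σ_{x ∈ δ(a)} (|δ(x)| − 1) holds. -/
/-!  Positive face structures, following M. Zawadowski.  `F k` is the set of
faces of dimension `k`; every face of positive dimension has a codomain face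
one dimension lower and a nonempty set of domain faces one dimension lower. -/

structure PrePFS where
  F : ℕ → Type
  γ : ∀ {k : ℕ}, F (k + 1) → F k
  δ : ∀ {k : ℕ}, F (k + 1) → Set (F k)

namespace PrePFS

variable (S : PrePFS)

/-- The strict upper order `<⁺`. -/
def ltP {k : ℕ} : S.F k → S.F k → Prop :=
  Relation.TransGen (fun x y => ∃ α : S.F (k + 1), x ∈ S.δ α ∧ S.γ α = y)

/-- The lower order `<⁻`. -/
def ltM {k : ℕ} : S.F (k + 1) → S.F (k + 1) → Prop :=
  Relation.TransGen (fun a b => S.γ a ∈ S.δ b)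

/-- A face is unary if its domain is a singleton. -/
def isUnary {k : ℕ} (a : S.F (k + 1)) : Prop := ∃ x, S.δ a = {x}

end PrePFS

/-- The axioms of a positive face structure. -/
structure IsPFS (S : PrePFS) : Prop where
  fin : ∀ k, Finite (S.F k)
  bdd : ∃ n, ∀ k, n < k → IsEmpty (S.F k)
  nonempty₀ : Nonempty (S.F 0)
  dom_nonempty : ∀ {k : ℕ} (a : S.F (k + 1)), (S.δ a).Nonempty
  glob_γ : ∀ {k : ℕ} (a : S.F (k + 2)),
    ({S.γ (S.γ a)} : Set (S.F k)) =
      {y | ∃ x ∈ S.δ a, S.γ x = y} \ (⋃ x ∈ S.δ a, S.δ x)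
  glob_δ : ∀ {k : ℕ} (a : S.F (k + 2)),
    S.δ (S.γ a) = (⋃ x ∈ S.δ a, S.δ x) \ {y | ∃ x ∈ S.δ a, S.γ x = y}
  strictP : ∀ {k : ℕ} (x : S.F k), ¬ S.ltP x x
  linearP₀ : ∀ x y : S.F 0, x = y ∨ S.ltP x y ∨ S.ltP y x
  disj : ∀ {k : ℕ} (a b : S.F (k + 1)),
    (S.ltM a b ∨ S.ltM b a) → ¬ (S.ltP a b ∨ S.ltP b a)
  pencil_γ : ∀ {k : ℕ} (a b : S.F (k + 1)),
    S.γ a = S.γ b → a = b ∨ S.ltP a b ∨ S.ltP b a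
  pencil_δ : ∀ {k : ℕ} (x : S.F k) (a b : S.F (k + 1)),
    x ∈ S.δ a → x ∈ S.δ b → a = b ∨ S.ltP a b ∨ S.ltP b a

section Lemmas

variable {S : PrePFS}

/-- ltM maps to ltP along γ. -/
lemma ltP_gamma_of_ltM {k : ℕ} {a b : S.F (k + 1)} (h : S.ltM a b) :
    S.ltP (S.γ a) (S.γ b) := by
  induction h with
  | single h => exact Relation.TransGen.single ⟨_, h, rfl⟩
  | tail _ hstep ih => exact ih.tail ⟨_, hstep, rfl⟩

lemma ltM_irrefl (hS : IsPFS S) {k : ℕ} (a : S.F (k + 1)) : ¬ S.ltM a a :=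
  fun h => hS.strictP (S.γ a) (ltP_gamma_of_ltM h)

/-- Structure of an ltP chain: first and last bounding faces. -/
lemma ltP_chain {k : ℕ} {x y : S.F k} (h : S.ltP x y) :
    ∃ α β : S.F (k + 1), x ∈ S.δ α ∧ S.γ β = y ∧ (α = β ∨ S.ltM α β) := by
  induction h with
  | single h => obtain ⟨α, hx, hγ⟩ := h; exact ⟨α, α, hx, hγ, Or.inl rfl⟩
  | tail _ hstep ih =>
      obtain ⟨α', hb, hγ'⟩ := hstep
      obtain ⟨α, β, hx, hγ, hc⟩ := ih
      refine ⟨α, α', hx, hγ', ?_⟩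
      right
      rcases hc with rfl | hM
      · exact Relation.TransGen.single (hγ ▸ hb)
      · exact hM.tail (hγ ▸ hb)

/-- Distinct faces in the same domain are ltP-incomparable. -/
lemma not_ltP_of_mem_delta (hS : IsPFS S) {k : ℕ} {a : S.F (k + 2)} {x y : S.F (k + 1)}
    (hx : x ∈ S.δ a) (hy : y ∈ S.δ a) : ¬ S.ltP x y := by
  intro h
  obtain ⟨α, β, hxα, hγβ, hc⟩ := ltP_chain h
  have hβa : S.ltM β a := Relation.TransGen.single (hγβ ▸ hy)
  have hαa : S.ltM α a := by
    rcases hc with rfl | hM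
    · exact hβa
    · exact hM.trans hβa
  rcases hS.pencil_δ x a α hx hxα with rfl | hcomp
  · exact ltM_irrefl hS a hαa
  · exact hS.disj α a (Or.inl hαa) (hcomp.symm.imp id id |>.symm.elim (fun h => Or.inr h) (fun h => Or.inl h))

end Lemmas

section Lemmas2

variable {S : PrePFS}

lemma gamma_injOn (hS : IsPFS S) {k : ℕ} {a : S.F (k + 2)} {x y : S.F (k + 1)}
    (hx : x ∈ S.δ a) (hy : y ∈ S.δ a) (h : S.γ x = S.γ y) : x = y := by
  rcases hS.pencil_γ x y h with rfl | h' | h'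
  · rfl
  · exact absurd h' (not_ltP_of_mem_delta hS hx hy)
  · exact absurd h' (not_ltP_of_mem_delta hS hy hx)

lemma delta_disjoint (hS : IsPFS S) {k : ℕ} {a : S.F (k + 2)} {x y : S.F (k + 1)}
    (hx : x ∈ S.δ a) (hy : y ∈ S.δ a) (hne : x ≠ y) {u : S.F k}
    (hux : u ∈ S.δ x) (huy : u ∈ S.δ y) : False := by
  rcases hS.pencil_δ u x y hux huy with rfl | h' | h'
  · exact hne rfl
  · exact not_ltP_of_mem_delta hS hx hy h'
  · exact not_ltP_of_mem_delta hS hy hx h'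

/-- γγa is a codomain of a domain face. -/
lemma gg_spec (hS : IsPFS S) {k : ℕ} (a : S.F (k + 2)) :
    (∃ x ∈ S.δ a, S.γ x = S.γ (S.γ a)) ∧ S.γ (S.γ a) ∉ ⋃ x ∈ S.δ a, S.δ x := by
  have h := hS.glob_γ a
  have : S.γ (S.γ a) ∈ ({S.γ (S.γ a)} : Set (S.F k)) := rfl
  rw [h] at this
  exact this

/-- A codomain of a domain face which is in no domain must be γγa. -/
lemma eq_gg (hS : IsPFS S) {k : ℕ} (a : S.F (k + 2)) {z : S.F k}
    (h1 : ∃ x ∈ S.δ a, S.γ x = z) (h2 : z ∉ ⋃ x ∈ S.δ a, S.δ x) :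
    z = S.γ (S.γ a) := by
  have h := hS.glob_γ a
  have : z ∈ ({S.γ (S.γ a)} : Set (S.F k)) := by rw [h]; exact ⟨h1, h2⟩
  exact this

end Lemmas2

section Counting

variable {S : PrePFS}

lemma card_formula (hS : IsPFS S) {k : ℕ} (a : S.F (k + 2)) :
    (S.δ (S.γ a)).ncard = 1 + ∑ᶠ x ∈ S.δ a, ((S.δ x).ncard - 1) := by
  classical
  haveI : Fintype (S.F k) := @Fintype.ofFinite _ (hS.fin k)
  haveI : Fintype (S.F (k + 1)) := @Fintype.ofFinite _ (hS.fin (k + 1))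
  set D : Finset (S.F (k + 1)) := (S.δ a).toFinset with hD
  set U : Finset (S.F k) := D.biUnion (fun x => (S.δ x).toFinset) with hU
  set G : Finset (S.F k) := D.image S.γ with hG
  have memD : ∀ x, x ∈ D ↔ x ∈ S.δ a := fun x => Set.mem_toFinset
  have memU : ∀ z, z ∈ U ↔ z ∈ ⋃ x ∈ S.δ a, S.δ x := by
    intro z
    simp [hU, Set.mem_toFinset, memD]
  have memG : ∀ z, z ∈ G ↔ ∃ x ∈ S.δ a, S.γ x = z := by
    intro z
    simp [hG, memD]
  -- δ(γ a) as a Finset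
  have h1 : (S.δ (S.γ a)).toFinset = U \ G := by
    ext z
    simp only [Set.mem_toFinset, Finset.mem_sdiff, memU, memG, hS.glob_δ a]
    rfl
  -- card of the union
  have h2 : U.card = ∑ x ∈ D, (S.δ x).toFinset.card := by
    apply Finset.card_biUnion
    intro x hx y hy hne
    rw [Function.onFun, Finset.disjoint_left]
    intro u hux huy
    exact delta_disjoint hS ((memD x).1 hx) ((memD y).1 hy) hne
      (Set.mem_toFinset.1 hux) (Set.mem_toFinset.1 huy)
  -- γ is injective
  have h3 : G.card = D.card := by
    apply Finset.card_image_of_injOn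
    intro x hx y hy h
    exact gamma_injOn hS ((memD x).1 hx) ((memD y).1 hy) h
  -- G \ U = {γγa}
  have h4 : G \ U = {S.γ (S.γ a)} := by
    ext z
    simp only [Finset.mem_sdiff, Finset.mem_singleton, memU, memG]
    constructor
    · rintro ⟨hz1, hz2⟩
      exact eq_gg hS a hz1 hz2
    · rintro rfl
      exact (gg_spec hS a)
  have h5 : (G \ U).card = 1 := by rw [h4]; rfl
  have h6 : (G ∩ U).card + (G \ U).card = G.card := Finset.card_inter_add_card_sdiff G U
  have h7 : (U \ G).card + (U ∩ G).card = U.card := by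
    rw [Finset.card_sdiff_add_card_inter]
  have h8 : (U ∩ G).card = (G ∩ U).card := by rw [Finset.inter_comm]
  -- per-term lower bound
  have h9 : ∑ x ∈ D, (S.δ x).toFinset.card
      = D.card + ∑ x ∈ D, ((S.δ x).toFinset.card - 1) := by
    have step : ∀ x ∈ D, (S.δ x).toFinset.card = 1 + ((S.δ x).toFinset.card - 1) := by
      intro x hx
      have : 0 < (S.δ x).toFinset.card := by
        rw [Finset.card_pos, Set.toFinset_nonempty]
        exact hS.dom_nonempty x
      omega
    rw [Finset.sum_congr rfl step, Finset.sum_add_distrib, Finset.sum_const,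
      smul_eq_mul, mul_one]
  have hfin : (S.δ a).Finite := Set.toFinite _
  have hsum : ∑ᶠ x ∈ S.δ a, ((S.δ x).ncard - 1) = ∑ x ∈ D, ((S.δ x).toFinset.card - 1) := by
    rw [← Set.Finite.coe_toFinset hfin, finsum_mem_coe_finset]
    apply Finset.sum_congr
    · ext x
      rw [Set.Finite.mem_toFinset, memD x]
    · intro x _
      rw [Set.ncard_eq_toFinset_card']
  rw [Set.ncard_eq_toFinset_card', h1, hsum]
  omega

end Counting

section Path

variable {S : PrePFS}

lemma measure_lt (hS : IsPFS S) {k : ℕ} {u w : S.F k} (h : S.ltP u w) :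
    {z | S.ltP w z}.ncard < {z | S.ltP u z}.ncard := by
  haveI := hS.fin k
  apply Set.ncard_lt_ncard _ (Set.toFinite _)
  rw [Set.ssubset_def]
  exact ⟨fun z hz => h.trans hz, fun hsub => hS.strictP w (hsub h)⟩

/-- If `x ∈ δ a` and `γ x ≠ γγ a`, then `γ x ∈ δ y` for some `y ∈ δ a`. -/
lemma next_face (hS : IsPFS S) {k : ℕ} {a : S.F (k + 2)} {x : S.F (k + 1)}
    (hx : x ∈ S.δ a) (hne : S.γ x ≠ S.γ (S.γ a)) :
    ∃ y ∈ S.δ a, S.γ x ∈ S.δ y := by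
  by_contra hc
  push_neg at hc
  apply hne
  apply eq_gg hS a ⟨x, hx, rfl⟩
  intro hmem
  obtain ⟨y, hy, hxy⟩ := Set.mem_iUnion₂.1 hmem
  exact hc y hy hxy

/-- From any face of `δ a` there is a lower path within `δ a` to the face with
codomain `γγ a`. -/
lemma path_to_top (hS : IsPFS S) {k : ℕ} (a : S.F (k + 2)) :
    ∀ x ∈ S.δ a, ∃ m, ∃ p : Fin (m + 1) → S.F (k + 1),
      p 0 = x ∧ (∀ i, p i ∈ S.δ a) ∧ S.γ (p (Fin.last m)) = S.γ (S.γ a) ∧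
      ∀ i : Fin m, S.γ (p i.castSucc) ∈ S.δ (p i.succ) := by
  haveI := hS.fin (k + 1)
  have done : ∀ x ∈ S.δ a, S.γ x = S.γ (S.γ a) →
      ∃ m, ∃ p : Fin (m + 1) → S.F (k + 1),
      p 0 = x ∧ (∀ i, p i ∈ S.δ a) ∧ S.γ (p (Fin.last m)) = S.γ (S.γ a) ∧
      ∀ i : Fin m, S.γ (p i.castSucc) ∈ S.δ (p i.succ) := by
    intro x hx hγ
    exact ⟨0, fun _ => x, rfl, fun _ => hx, hγ, fun i => i.elim0⟩
  have main : ∀ n, ∀ x, x ∈ S.δ a → {z | S.ltP (S.γ x) z}.ncard ≤ n →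
      ∃ m, ∃ p : Fin (m + 1) → S.F (k + 1),
      p 0 = x ∧ (∀ i, p i ∈ S.δ a) ∧ S.γ (p (Fin.last m)) = S.γ (S.γ a) ∧
      ∀ i : Fin m, S.γ (p i.castSucc) ∈ S.δ (p i.succ) := by
    intro n
    induction n with
    | zero =>
        intro x hx hm
        by_cases hγ : S.γ x = S.γ (S.γ a)
        · exact done x hx hγ
        · obtain ⟨y, hy, hxy⟩ := next_face hS hx hγ
          have := measure_lt hS (Relation.TransGen.single ⟨y, hxy, rfl⟩)
          omega
    | succ n ih =>
        intro x hx hm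
        by_cases hγ : S.γ x = S.γ (S.γ a)
        · exact done x hx hγ
        · obtain ⟨y, hy, hxy⟩ := next_face hS hx hγ
          have hlt := measure_lt hS (Relation.TransGen.single (b := S.γ y) ⟨y, hxy, rfl⟩)
          obtain ⟨m, q, hq0, hqmem, hqlast, hqstep⟩ := ih y hy (by omega)
          refine ⟨m + 1, Fin.cases x q, Fin.cases_zero .., ?_, ?_, ?_⟩
          · intro i
            induction i using Fin.cases with
            | zero => simpa using hx
            | succ j => simpa using hqmem j
          · exact hqlast
          · intro i
            rcases Fin.eq_zero_or_eq_succ i with rfl | ⟨j, rfl⟩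
            · show S.γ x ∈ S.δ (q 0)
              rw [hq0]; exact hxy
            · exact hqstep j
  intro x hx
  exact main _ x hx le_rfl

end Path

section Cover

variable {S : PrePFS}

/-- If there is a unary path from `v ∈ δγa` to `γγa`, then every face of
`δ a` lies on the path. -/
lemma path_covers (hS : IsPFS S) {k : ℕ} (a : S.F (k + 2)) {v : S.F k}
    (hv : v ∈ S.δ (S.γ a)) {m : ℕ} {p : Fin (m + 1) → S.F (k + 1)}
    (hp : ∀ i, p i ∈ S.δ a ∧ ∃ y, S.δ (p i) = {y})
    (hv0 : v ∈ S.δ (p 0)) (hlast : S.γ (p (Fin.last m)) = S.γ (S.γ a))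
    (hstep : ∀ i : Fin m, S.γ (p i.castSucc) ∈ S.δ (p i.succ)) :
    ∀ x ∈ S.δ a, ∃ i, x = p i := by
  have hvδ := hv
  rw [hS.glob_δ a] at hvδ
  have main : ∀ n, ∀ x, x ∈ S.δ a → {z | S.ltP (S.γ x) z}.ncard ≤ n →
      ∃ i, x = p i := by
    intro n
    induction n with
    | zero =>
        intro x hx hm
        by_cases hγ : S.γ x = S.γ (S.γ a)
        · exact ⟨Fin.last m, gamma_injOn hS hx (hp _).1 (hγ.trans hlast.symm)⟩
        · obtain ⟨y, hy, hxy⟩ := next_face hS hx hγ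
          have := measure_lt hS (Relation.TransGen.single (b := S.γ y) ⟨y, hxy, rfl⟩)
          omega
    | succ n ih =>
        intro x hx hm
        by_cases hγ : S.γ x = S.γ (S.γ a)
        · exact ⟨Fin.last m, gamma_injOn hS hx (hp _).1 (hγ.trans hlast.symm)⟩
        · obtain ⟨y, hy, hxy⟩ := next_face hS hx hγ
          have hlt := measure_lt hS (Relation.TransGen.single (b := S.γ y) ⟨y, hxy, rfl⟩)
          obtain ⟨j, rfl⟩ := ih y hy (by omega)
          rcases Fin.eq_zero_or_eq_succ j with rfl | ⟨i, rfl⟩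
          · -- γ x ∈ δ (p 0) = {v}, but v is not a codomain
            exfalso
            obtain ⟨w, hw⟩ := (hp 0).2
            have hxv : S.γ x = v := by
              have h1 : S.γ x ∈ ({w} : Set (S.F k)) := hw ▸ hxy
              have h2 : v ∈ ({w} : Set (S.F k)) := hw ▸ hv0
              rw [h1, h2]
            exact hvδ.2 ⟨x, hx, hxv⟩
          · -- δ (p i.succ) = {γ (p i.castSucc)}
            obtain ⟨w, hw⟩ := (hp i.succ).2
            have h1 : S.γ x ∈ ({w} : Set (S.F k)) := hw ▸ hxy
            have h2 : S.γ (p i.castSucc) ∈ ({w} : Set (S.F k)) := hw ▸ hstep i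
            have : S.γ x = S.γ (p i.castSucc) := by rw [h1, h2]
            exact ⟨i.castSucc, gamma_injOn hS hx (hp _).1 this⟩
  intro x hx
  exact main _ x hx le_rfl

end Cover

section SumZero

variable {S : PrePFS}

lemma sum_zero_iff (hS : IsPFS S) {k : ℕ} (a : S.F (k + 2)) :
    (∑ᶠ x ∈ S.δ a, ((S.δ x).ncard - 1) = 0) ↔ ∀ x ∈ S.δ a, ∃ y, S.δ x = {y} := by
  haveI := hS.fin (k + 1)
  haveI := hS.fin k
  have hfin : (S.δ a).Finite := Set.toFinite _
  have conv : ∑ᶠ x ∈ S.δ a, ((S.δ x).ncard - 1)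
      = ∑ x ∈ hfin.toFinset, ((S.δ x).ncard - 1) := by
    conv_lhs => rw [← Set.Finite.coe_toFinset hfin]
    rw [finsum_mem_coe_finset]
  rw [conv, Finset.sum_eq_zero_iff]
  constructor
  · intro h x hx
    have h1 := h x (hfin.mem_toFinset.2 hx)
    have pos : 0 < (S.δ x).ncard := (Set.ncard_pos (Set.toFinite _)).mpr (hS.dom_nonempty x)
    exact Set.ncard_eq_one.mp (by omega)
  · intro h x hx
    obtain ⟨y, hy⟩ := h x (hfin.mem_toFinset.1 hx)
    simp [hy, Set.ncard_singleton]

end SumZero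

/-- in a positive face structure, `γ(a)` is unary iff every face
of `δ(a)` is unary iff there are `v ∈ δγ(a)` and an upper path through unary
faces of `δ(a)` from `v` to `γγ(a)`; moreover
`|δγ(a)| = 1 + Σ_{x ∈ δ(a)} (|δ(x)| − 1)`. -/
theorem stmt17 (S : PrePFS) (hS : IsPFS S) {k : ℕ} (a : S.F (k + 2)) :
    (((∃ y, S.δ (S.γ a) = {y}) ↔ ∀ x ∈ S.δ a, ∃ y, S.δ x = {y}) ∧
      ((∀ x ∈ S.δ a, ∃ y, S.δ x = {y}) ↔
        ∃ v ∈ S.δ (S.γ a), ∃ m : ℕ, ∃ p : Fin (m + 1) → S.F (k + 1),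
          (∀ i, p i ∈ S.δ a ∧ ∃ y, S.δ (p i) = {y}) ∧
          v ∈ S.δ (p 0) ∧ S.γ (p (Fin.last m)) = S.γ (S.γ a) ∧
          ∀ i : Fin m, S.γ (p i.castSucc) ∈ S.δ (p i.succ))) ∧
    (S.δ (S.γ a)).ncard = 1 + ∑ᶠ x ∈ S.δ a, ((S.δ x).ncard - 1) := by
  have hcard := card_formula hS a
  have hsum := sum_zero_iff hS a
  refine ⟨⟨?_, ?_⟩, hcard⟩
  · constructor
    · rintro ⟨y, hy⟩
      have h1 : (S.δ (S.γ a)).ncard = 1 := by rw [hy]; exact Set.ncard_singleton y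
      exact hsum.mp (by omega)
    · intro hb
      have h0 := hsum.mpr hb
      exact Set.ncard_eq_one.mp (by omega)
  · constructor
    · intro hb
      obtain ⟨v, hv⟩ := hS.dom_nonempty (S.γ a)
      have hv' := hv
      rw [hS.glob_δ a] at hv'
      obtain ⟨x₀, hx₀, hvx₀⟩ := Set.mem_iUnion₂.1 hv'.1
      obtain ⟨m, p, hp0, hpmem, hplast, hpstep⟩ := path_to_top hS a x₀ hx₀
      exact ⟨v, hv, m, p, fun i => ⟨hpmem i, hb _ (hpmem i)⟩,
        by rw [hp0]; exact hvx₀, hplast, hpstep⟩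
    · rintro ⟨v, hv, m, p, hp, hv0, hlast, hstep⟩ x hx
      obtain ⟨i, rfl⟩ := path_covers hS a hv hp hv0 hlast hstep x hx
      exact (hp i).2
end

section
/- Let T be a positive face structure and 𝒥 ⊆ T^u an ideal (a set of unary faces with 𝒥 ∩ γ(T) = ∅ and 𝒥 ∩ δ(𝒥) = ∅). Then for faces x, y ∈ T − 𝒥, the equivalence classes [x] and [y] under ∼_𝒥 are equal iff x = y or there is an upper 𝒥-path from x to y or from y to x. -/
/-- The least equivalence relation containing `r`. -/
inductive EqvClosure {α : Type} (r : α → α → Prop) : α → α → Prop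
  | rel : ∀ x y, r x y → EqvClosure r x y
  | refl : ∀ x, EqvClosure r x x
  | symm : ∀ x y, EqvClosure r x y → EqvClosure r y x
  | trans : ∀ x y z, EqvClosure r x y → EqvClosure r y z → EqvClosure r x z

/-- An ideal in a positive face structure: a set of unary faces which are
neither codomains of faces nor members of domains of ideal faces. -/
structure IsIdeal (S : PrePFS) (J : ∀ k, Set (S.F k)) : Prop where
  j₀ : J 0 = ∅
  unary : ∀ {k : ℕ} (a : S.F (k + 1)), a ∈ J (k + 1) → ∃ x, S.δ a = {x}
  not_cod : ∀ {k : ℕ} (x : S.F k), x ∈ J k → ¬ ∃ α : S.F (k + 1), S.γ α = x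
  not_dom : ∀ {k : ℕ} (x : S.F k), x ∈ J k →
    ¬ ∃ α : S.F (k + 1), α ∈ J (k + 1) ∧ x ∈ S.δ α

/-- The generating relation of `∼_𝒥` : `x ∼' y` iff there is `a ∈ 𝒥` with
`δ(a) = {x}` and `γ(a) = y`. -/
def relJ (S : PrePFS) (J : ∀ k, Set (S.F k)) (k : ℕ) (x y : S.F k) : Prop :=
  ∃ a : S.F (k + 1), a ∈ J (k + 1) ∧ S.δ a = {x} ∧ S.γ a = y

/-- The equivalence relation `∼_𝒥`. -/
def simJ (S : PrePFS) (J : ∀ k, Set (S.F k)) (k : ℕ) : S.F k → S.F k → Prop :=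
  EqvClosure (relJ S J k)

/-- An upper `𝒥`-path from `x` to `y`. -/
def pathJ (S : PrePFS) (J : ∀ k, Set (S.F k)) (k : ℕ) (x y : S.F k) : Prop :=
  ∃ m : ℕ, ∃ p : Fin (m + 1) → S.F (k + 1),
    (∀ i, p i ∈ J (k + 1)) ∧ x ∈ S.δ (p 0) ∧ S.γ (p (Fin.last m)) = y ∧
    ∀ i : Fin m, S.γ (p i.castSucc) ∈ S.δ (p i.succ)

/-- Auxiliary: any `ltP`-greater face is a codomain. -/
lemma ltP_is_cod (S : PrePFS) {k : ℕ} {a b : S.F k} (h : S.ltP a b) :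
    ∃ α : S.F (k + 1), S.γ α = b := by
  induction h with
  | single h => obtain ⟨α, _, hα⟩ := h; exact ⟨α, hα⟩
  | tail _ h _ => obtain ⟨α, _, hα⟩ := h; exact ⟨α, hα⟩

/-- Two ideal faces with the same codomain are equal. -/
lemma ideal_uniq_γ (S : PrePFS) (hS : IsPFS S) {J : ∀ k, Set (S.F k)}
    (hJ : IsIdeal S J) {k : ℕ} {a b : S.F (k + 1)}
    (ha : a ∈ J (k + 1)) (hb : b ∈ J (k + 1)) (h : S.γ a = S.γ b) : a = b := by
  rcases hS.pencil_γ a b h with h' | h' | h'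
  · exact h'
  · exact absurd (ltP_is_cod S h') (hJ.not_cod b hb)
  · exact absurd (ltP_is_cod S h') (hJ.not_cod a ha)

/-- Two ideal faces with intersecting domains are equal. -/
lemma ideal_uniq_δ (S : PrePFS) (hS : IsPFS S) {J : ∀ k, Set (S.F k)}
    (hJ : IsIdeal S J) {k : ℕ} {x : S.F k} {a b : S.F (k + 1)}
    (ha : a ∈ J (k + 1)) (hb : b ∈ J (k + 1)) (hxa : x ∈ S.δ a)
    (hxb : x ∈ S.δ b) : a = b := by
  rcases hS.pencil_δ x a b hxa hxb with h' | h' | h'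
  · exact h'
  · exact absurd (ltP_is_cod S h') (hJ.not_cod b hb)
  · exact absurd (ltP_is_cod S h') (hJ.not_cod a ha)

lemma relJ_functional (S : PrePFS) (hS : IsPFS S) {J : ∀ k, Set (S.F k)}
    (hJ : IsIdeal S J) {k : ℕ} {x y z : S.F k}
    (h₁ : relJ S J k x y) (h₂ : relJ S J k x z) : y = z := by
  obtain ⟨a, ha, hda, hga⟩ := h₁
  obtain ⟨b, hb, hdb, hgb⟩ := h₂
  have hxa : x ∈ S.δ a := by rw [hda]; exact rfl
  have hxb : x ∈ S.δ b := by rw [hdb]; exact rfl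
  have : a = b := ideal_uniq_δ S hS hJ ha hb hxa hxb
  rw [← hga, ← hgb, this]

lemma relJ_injective (S : PrePFS) (hS : IsPFS S) {J : ∀ k, Set (S.F k)}
    (hJ : IsIdeal S J) {k : ℕ} {x y z : S.F k}
    (h₁ : relJ S J k x z) (h₂ : relJ S J k y z) : x = y := by
  obtain ⟨a, ha, hda, hga⟩ := h₁
  obtain ⟨b, hb, hdb, hgb⟩ := h₂
  have hab : a = b := ideal_uniq_γ S hS hJ ha hb (by rw [hga, hgb])
  have : ({x} : Set (S.F k)) = {y} := by rw [← hda, ← hdb, hab]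
  simpa using this

lemma pathJ_transGen_aux (S : PrePFS) {J : ∀ k, Set (S.F k)}
    (hJ : IsIdeal S J) (k : ℕ) :
    ∀ (m : ℕ) (p : Fin (m + 1) → S.F (k + 1)), (∀ i, p i ∈ J (k + 1)) →
      ∀ x, x ∈ S.δ (p 0) → (∀ i : Fin m, S.γ (p i.castSucc) ∈ S.δ (p i.succ)) →
      Relation.TransGen (relJ S J k) x (S.γ (p (Fin.last m))) := by
  intro m
  induction m with
  | zero =>
    intro p hp x hx _
    refine Relation.TransGen.single ⟨p 0, hp 0, ?_, rfl⟩
    obtain ⟨z, hz⟩ := hJ.unary (p 0) (hp 0)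
    rw [hz] at hx ⊢
    simp_all
  | succ m ih =>
    intro p hp x hx hchain
    have h1 := ih (fun i => p i.castSucc) (fun i => hp _) x (by simpa using hx)
      (fun i => by simpa only [Fin.succ_castSucc] using hchain i.castSucc)
    refine h1.tail ?_
    refine ⟨p (Fin.last (m + 1)), hp _, ?_, rfl⟩
    obtain ⟨w, hw⟩ := hJ.unary _ (hp (Fin.last (m + 1)))
    have hz : S.γ (p (Fin.last m).castSucc) ∈ S.δ (p (Fin.last (m + 1))) :=
      hchain (Fin.last m)
    rw [hw] at hz ⊢
    simp_all

/-- `pathJ` is the transitive closure of `relJ`. -/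
lemma pathJ_iff_transGen (S : PrePFS) {J : ∀ k, Set (S.F k)}
    (hJ : IsIdeal S J) (k : ℕ) (x y : S.F k) :
    pathJ S J k x y ↔ Relation.TransGen (relJ S J k) x y := by
  constructor
  · rintro ⟨m, p, hp, hx, hy, hchain⟩
    rw [← hy]
    exact pathJ_transGen_aux S hJ k m p hp x hx hchain
  · intro h
    induction h with
    | single h =>
      obtain ⟨a, ha, hda, hga⟩ := h
      exact ⟨0, fun _ => a, fun _ => ha, by rw [hda]; rfl, hga,
        fun i => i.elim0⟩
    | @tail b c _ h ih =>
      obtain ⟨m, p, hp, hx, hb, hchain⟩ := ih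
      obtain ⟨a, ha, hda, hga⟩ := h
      refine ⟨m + 1, Fin.snoc p a, fun i => ?_, ?_, ?_, fun i => ?_⟩
      · cases i using Fin.lastCases with
        | last => rw [Fin.snoc_last]; exact ha
        | cast j => rw [Fin.snoc_castSucc]; exact hp j
      · have h0 : (0 : Fin (m + 2)) = Fin.castSucc 0 := rfl
        rw [h0, Fin.snoc_castSucc]; exact hx
      · rw [Fin.snoc_last]; exact hga
      · cases i using Fin.lastCases with
        | last =>
          rw [Fin.succ_last, Fin.snoc_last, Fin.snoc_castSucc, hda, hb]
          exact rfl
        | cast j =>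
          rw [Fin.succ_castSucc, Fin.snoc_castSucc, Fin.snoc_castSucc]
          exact hchain j

section general
variable {α : Type} {r : α → α → Prop}

open Relation

lemma back_comparable (hinj : ∀ x y z, r x z → r y z → x = y) :
    ∀ {x z y}, ReflTransGen r x y → ReflTransGen r z y →
      ReflTransGen r x z ∨ ReflTransGen r z x := by
  intro x z y hxy
  induction hxy using ReflTransGen.head_induction_on with
  | refl => exact fun h => Or.inr h
  | head hxx' _ ih =>
    intro hzy
    rcases ih hzy with h | h
    · exact Or.inl (ReflTransGen.head hxx' h)
    · rcases h.cases_tail with h | ⟨w, hzw, hwx'⟩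
      · subst h; exact Or.inl (ReflTransGen.single hxx')
      · have := hinj _ _ _ hwx' hxx'
        subst this; exact Or.inr hzw

lemma fwd_comparable (hfun : ∀ x y z, r x y → r x z → y = z) :
    ∀ {y z x}, ReflTransGen r x y → ReflTransGen r x z →
      ReflTransGen r y z ∨ ReflTransGen r z y := by
  intro y z x hxy
  induction hxy using ReflTransGen.head_induction_on with
  | refl => exact fun h => Or.inl h
  | @head a c hac hcy ih =>
    intro haz
    rcases haz.cases_head with h | ⟨w, haw, hwz⟩
    · subst h; exact Or.inr (ReflTransGen.head hac hcy)
    · have := hfun _ _ _ hac haw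
      subst this; exact ih hwz

lemma eqvClosure_iff (hfun : ∀ x y z, r x y → r x z → y = z)
    (hinj : ∀ x y z, r x z → r y z → x = y) {x y : α}
    (h : EqvClosure r x y) : ReflTransGen r x y ∨ ReflTransGen r y x := by
  induction h with
  | rel x y h => exact Or.inl (ReflTransGen.single h)
  | refl x => exact Or.inl ReflTransGen.refl
  | symm x y _ ih => exact ih.symm
  | trans x y z _ _ ih₁ ih₂ =>
    rcases ih₁ with h₁ | h₁ <;> rcases ih₂ with h₂ | h₂
    · exact Or.inl (h₁.trans h₂)
    · exact back_comparable hinj h₁ h₂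
    · exact fwd_comparable hfun h₁ h₂
    · exact Or.inr (h₂.trans h₁)

end general

/-- for `x, y ∉ 𝒥`, `[x] = [y]` under `∼_𝒥` iff `x = y` or
there is an upper `𝒥`-path from `x` to `y` or from `y` to `x`. -/
theorem stmt18 (S : PrePFS) (hS : IsPFS S) (J : ∀ k, Set (S.F k))
    (hJ : IsIdeal S J) (k : ℕ) (x y : S.F k) (hx : x ∉ J k) (hy : y ∉ J k) :
    simJ S J k x y ↔ (x = y ∨ pathJ S J k x y ∨ pathJ S J k y x) := by

  have hfun : ∀ a b c, relJ S J k a b → relJ S J k a c → b = c :=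
    fun a b c h₁ h₂ => relJ_functional S hS hJ h₁ h₂
  have hinj : ∀ a b c, relJ S J k a c → relJ S J k b c → a = b :=
    fun a b c h₁ h₂ => relJ_injective S hS hJ h₁ h₂
  constructor
  · intro h
    rcases eqvClosure_iff hfun hinj h with h | h
    · rcases (Relation.reflTransGen_iff_eq_or_transGen.mp h) with h | h
      · exact Or.inl h.symm
      · exact Or.inr (Or.inl ((pathJ_iff_transGen S hJ k x y).mpr h))
    · rcases (Relation.reflTransGen_iff_eq_or_transGen.mp h) with h | h
      · exact Or.inl h
      · exact Or.inr (Or.inr ((pathJ_iff_transGen S hJ k y x).mpr h))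
  · clear hx hy
    rintro (rfl | h | h)
    · exact EqvClosure.refl x
    · have := (pathJ_iff_transGen S hJ k x y).mp h
      clear h
      induction this with
      | single h => exact EqvClosure.rel _ _ h
      | tail _ h ih => exact EqvClosure.trans _ _ _ ih (EqvClosure.rel _ _ h)
    · have := (pathJ_iff_transGen S hJ k y x).mp h
      clear h
      refine EqvClosure.symm _ _ ?_
      induction this with
      | single h => exact EqvClosure.rel _ _ h
      | tail _ h ih => exact EqvClosure.trans _ _ _ ih (EqvClosure.rel _ _ h)
end
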